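/- Let R ⊆ α × β, S ⊆ β × γ, T ⊆ γ × α be finite relations and let C3 = {(x,y,z) : (x,y) ∈ R, (y,z) ∈ S, (z,x) ∈ T} be the triangle (3-clique) join. Then |C3| ≤ (|R| · |S| · |T|)^{1/2}. (The AGM bound for the triangle query, corresponding to the fractional edge cover with all weights 1/2.) -/

import Mathlib

private lemma agm_aux_cs {ι : Type*} (u : Finset ι) (f g : ι → ℝ)
    (hf : ∀ i, 0 ≤ f i) (hg : ∀ i, 0 ≤ g i) :
    ∑ i ∈ u, Real.sqrt (f i) * Real.sqrt (g i)
      ≤ Real.sqrt (∑ i ∈ u, f i) * Real.sqrt (∑ i ∈ u, g i) := by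
  have h := Finset.sum_mul_sq_le_sq_mul_sq u (fun i => Real.sqrt (f i))
    (fun i => Real.sqrt (g i))
  have hf2 : ∑ i ∈ u, (Real.sqrt (f i)) ^ 2 = ∑ i ∈ u, f i :=
    Finset.sum_congr rfl fun i _ => Real.sq_sqrt (hf i)
  have hg2 : ∑ i ∈ u, (Real.sqrt (g i)) ^ 2 = ∑ i ∈ u, g i :=
    Finset.sum_congr rfl fun i _ => Real.sq_sqrt (hg i)
  rw [hf2, hg2] at h
  have hnn : (0:ℝ) ≤ ∑ i ∈ u, Real.sqrt (f i) * Real.sqrt (g i) :=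
    Finset.sum_nonneg fun i _ => mul_nonneg (Real.sqrt_nonneg _) (Real.sqrt_nonneg _)
  rw [← Real.sqrt_mul (Finset.sum_nonneg fun i _ => hf i)]
  exact (Real.le_sqrt hnn (mul_nonneg (Finset.sum_nonneg fun i _ => hf i)
    (Finset.sum_nonneg fun i _ => hg i))).mpr h

private lemma agm_aux_min (a b c : ℝ) (ha : 0 ≤ a) (hb : 0 ≤ b) (hc : 0 ≤ c)
    (h1 : a ≤ b) (h2 : a ≤ c) : a ≤ Real.sqrt b * Real.sqrt c := by
  rw [← Real.sqrt_mul hb]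
  exact (Real.le_sqrt ha (mul_nonneg hb hc)).mpr
    (by nlinarith)

set_option maxHeartbeats 1000000 in
/-- The AGM bound for the triangle query: `|C3| ≤ (|R| · |S| · |T|)^{1/2}`. -/
theorem triangle_agm_bound {α β γ : Type*} [Fintype α] [Fintype β] [Fintype γ]
    [DecidableEq α] [DecidableEq β] [DecidableEq γ]
    (R : Finset (α × β)) (S : Finset (β × γ)) (T : Finset (γ × α)) :
    ((Finset.univ.filter
        (fun t : α × β × γ =>
          (t.1, t.2.1) ∈ R ∧ (t.2.1, t.2.2) ∈ S ∧ (t.2.2, t.1) ∈ T)).card : ℝ)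
    ≤ ((R.card : ℝ) * (S.card : ℝ) * (T.card : ℝ)) ^ ((1 : ℝ) / 2) := by
  classical
  obtain ⟨F, hF⟩ : ∃ F : γ → Finset (α × β), F = fun z =>
      Finset.univ.filter (fun p : α × β => (p.1, p.2) ∈ R ∧ (p.2, z) ∈ S ∧ (z, p.1) ∈ T) :=
    ⟨_, rfl⟩
  obtain ⟨s, hs⟩ : ∃ s : γ → ℕ, s = fun z => (S.filter (fun q => q.2 = z)).card := ⟨_, rfl⟩
  obtain ⟨t, ht⟩ : ∃ t : γ → ℕ, t = fun z => (T.filter (fun q => q.1 = z)).card := ⟨_, rfl⟩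
  -- card decomposition
  have hcard : (Finset.univ.filter
      (fun t : α × β × γ =>
        (t.1, t.2.1) ∈ R ∧ (t.2.1, t.2.2) ∈ S ∧ (t.2.2, t.1) ∈ T)).card
      = ∑ z : γ, (F z).card := by
    rw [Finset.card_eq_sum_card_fiberwise (f := fun t : α × β × γ => t.2.2)
      (t := Finset.univ) (fun x _ => Finset.mem_univ _)]
    refine Finset.sum_congr rfl (fun z _ => ?_)
    apply Finset.card_bij (fun (u : α × β × γ) _ => (u.1, u.2.1))
    · rintro ⟨x, y, z'⟩ hu
      simp only [hF, Finset.mem_filter, Finset.mem_univ, true_and] at hu ⊢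
      obtain ⟨⟨h1, h2, h3⟩, rfl⟩ := hu
      exact ⟨h1, h2, h3⟩
    · rintro ⟨x, y, z1⟩ h1 ⟨x', y', z2⟩ h2 h
      simp only [Finset.mem_filter] at h1 h2
      simp only [Prod.mk.injEq] at h
      simp [h.1, h.2, h1.2, h2.2]
    · rintro ⟨x, y⟩ hp
      simp only [hF, Finset.mem_filter, Finset.mem_univ, true_and] at hp
      exact ⟨(x, y, z), by simp [hp], rfl⟩
  -- bound 1 : F z ⊆ R
  have hFR : ∀ z, (F z).card ≤ R.card := by
    intro z
    apply Finset.card_le_card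
    intro p hp
    simp only [hF, Finset.mem_filter, Finset.mem_univ, true_and] at hp
    exact hp.1
  -- bound 2
  have hFst : ∀ z, (F z).card ≤ t z * s z := by
    intro z
    have hprod : t z * s z
        = ((T.filter (fun q => q.1 = z)) ×ˢ (S.filter (fun q => q.2 = z))).card := by
      rw [Finset.card_product, hs, ht]
    rw [hprod]
    apply Finset.card_le_card_of_injOn (fun p => ((z, p.1), (p.2, z)))
    · intro p hp
      simp only [hF, Finset.mem_coe, Finset.mem_filter, Finset.mem_univ, true_and] at hp
      simp [Finset.mem_product, hp.2.1, hp.2.2]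
    · rintro ⟨x, y⟩ _ ⟨x', y'⟩ _ h
      simp only [Prod.mk.injEq] at h
      simp [h.1.2, h.2.1]
  -- sum of degrees
  have hsS : ∑ z : γ, s z = S.card := by
    rw [hs, Finset.card_eq_sum_card_fiberwise (f := fun q : β × γ => q.2)
      (t := Finset.univ) (fun x _ => Finset.mem_univ _)]
  have htT : ∑ z : γ, t z = T.card := by
    rw [ht, Finset.card_eq_sum_card_fiberwise (f := fun q : γ × α => q.1)
      (t := Finset.univ) (fun x _ => Finset.mem_univ _)]
  -- real-valued bound per fiber
  have hfiber : ∀ z, ((F z).card : ℝ) ≤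
      Real.sqrt (R.card) * (Real.sqrt (s z) * Real.sqrt (t z)) := by
    intro z
    have hA : ((F z).card : ℝ) ≤ (R.card : ℝ) := by exact_mod_cast hFR z
    have hB : ((F z).card : ℝ) ≤ (s z : ℝ) * (t z : ℝ) := by
      have := hFst z
      have : ((F z).card : ℝ) ≤ (t z : ℝ) * (s z : ℝ) := by exact_mod_cast this
      linarith [this]
    have hmin := agm_aux_min ((F z).card : ℝ) (R.card : ℝ) ((s z : ℝ) * (t z : ℝ))
      (Nat.cast_nonneg _) (Nat.cast_nonneg _)
      (mul_nonneg (Nat.cast_nonneg _) (Nat.cast_nonneg _)) hA hB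
    rwa [Real.sqrt_mul (Nat.cast_nonneg _)] at hmin
  -- Cauchy–Schwarz
  have hCS : ∑ z : γ, Real.sqrt (s z) * Real.sqrt (t z)
      ≤ Real.sqrt (S.card) * Real.sqrt (T.card) := by
    have h := agm_aux_cs Finset.univ (fun z => ((s z : ℝ))) (fun z => ((t z : ℝ)))
      (fun i => Nat.cast_nonneg _) (fun i => Nat.cast_nonneg _)
    have e1 : ∑ z : γ, ((s z : ℝ)) = (S.card : ℝ) := by rw [← hsS]; push_cast; rfl
    have e2 : ∑ z : γ, ((t z : ℝ)) = (T.card : ℝ) := by rw [← htT]; push_cast; rfl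
    rwa [e1, e2] at h
  -- combine
  rw [hcard]
  push_cast
  calc ∑ z : γ, ((F z).card : ℝ)
      ≤ ∑ z : γ, Real.sqrt (R.card) * (Real.sqrt (s z) * Real.sqrt (t z)) :=
        Finset.sum_le_sum fun z _ => hfiber z
    _ = Real.sqrt (R.card) * ∑ z : γ, Real.sqrt (s z) * Real.sqrt (t z) := by
        rw [Finset.mul_sum]
    _ ≤ Real.sqrt (R.card) * (Real.sqrt (S.card) * Real.sqrt (T.card)) :=
        mul_le_mul_of_nonneg_left hCS (Real.sqrt_nonneg _)
    _ = Real.sqrt ((R.card : ℝ) * (S.card : ℝ) * (T.card : ℝ)) := by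
        rw [← Real.sqrt_mul (Nat.cast_nonneg _), ← Real.sqrt_mul (Nat.cast_nonneg _),
          ← mul_assoc]
    _ = ((R.card : ℝ) * (S.card : ℝ) * (T.card : ℝ)) ^ ((1:ℝ)/2) := Real.sqrt_eq_rpow _
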